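/- Let k be a perfect field of characteristic p > 0, let A = k[[x_1, …, x_d]] be the formal power series ring in d ≥ 1 variables with maximal ideal m, and let f ∈ m^n ∖ m^{n+1} for some integer n ≥ 1. Let f_n be the initial form of f, i.e., its degree-n homogeneous component (a nonzero homogeneous polynomial of degree n). Let t be a rational number with 0 ≤ t < min{1, d/n}, and suppose there are positive integers m_1, …, m_d such that the ideal (x_1^{m_1}, …, x_d^{m_d}) of A is contained in the ideal J = (∂f_n/∂x_1, …, ∂f_n/∂x_d) generated by the partial derivatives of f_n. If p ≥ (m_1 + ⋯ + m_d)/(d − n·t), then f^{⌊t·p^e⌋} ∉ m^{[p^e]} for every integer e ≥ 1; that is, the pair (A, t·div(f)) is strongly F-pure. -/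

import Mathlib

/-- The `q`-th bracket (Frobenius) power `J^{[q]}` of an ideal. -/
def bracketPow {R : Type*} [CommRing R] (J : Ideal R) (q : ℕ) : Ideal R :=
  Ideal.span ((fun a => a ^ q) '' (J : Set R))

section Aux

open MvPowerSeries

variable {d p : ℕ} {k : Type*} [Field k]

theorem mem_span_X {g : MvPowerSeries (Fin d) k}
    (hg : constantCoeff g = 0) :
    g ∈ Ideal.span (Set.range (X : Fin d → MvPowerSeries (Fin d) k)) := by
  classical
  set h : Fin d → MvPowerSeries (Fin d) k := fun i b =>
    if ∀ j, j < i → b j = 0 then coeff (b + Finsupp.single i 1) g else 0 with hh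
  have coeff_h : ∀ (i : Fin d) (b : Fin d →₀ ℕ),
      coeff b (h i) = if ∀ j, j < i → b j = 0 then coeff (b + Finsupp.single i 1) g else 0 :=
    fun i b => rfl
  have key : g = ∑ i, X i * h i := by
    ext a
    rw [map_sum]
    rcases eq_or_ne a 0 with rfl | ha
    · rw [Finset.sum_eq_zero (fun i _ => coeff_zero_X_mul _ _), coeff_zero_eq_constantCoeff]
      exact hg
    · have hsupp : a.support.Nonempty := Finsupp.support_nonempty_iff.2 ha
      set i₀ := a.support.min' hsupp with hi₀
      have hi₀mem : i₀ ∈ a.support := a.support.min'_mem hsupp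
      have hai₀ : a i₀ ≠ 0 := Finsupp.mem_support_iff.1 hi₀mem
      have hlt : ∀ j, j < i₀ → a j = 0 := by
        intro j hj
        by_contra hja
        exact absurd (a.support.min'_le j (Finsupp.mem_support_iff.2 hja)) (not_le.2 hj)
      have main : coeff a (X i₀ * h i₀) = coeff a g := by
        have hle : Finsupp.single i₀ 1 ≤ a := by
          rw [Finsupp.single_le_iff]; omega
        rw [X, coeff_monomial_mul, if_pos hle, one_mul, coeff_h, if_pos, tsub_add_cancel_of_le hle]
        intro j hj
        rw [Finsupp.tsub_apply, hlt j hj]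
        simp
      have other : ∀ i, i ≠ i₀ → coeff a (X i * h i) = 0 := by
        intro i hi
        rw [X, coeff_monomial_mul]
        split_ifs with hle
        · rw [one_mul, coeff_h, if_neg]
          intro hcond
          rcases lt_or_gt_of_ne hi with hlt' | hgt
          · have h1 : 1 ≤ a i := by
              have := Finsupp.single_le_iff.1 hle
              simpa using this
            have h2 := hlt i hlt'
            omega
          · have h0 := hcond i₀ hgt
            rw [Finsupp.tsub_apply, Finsupp.single_apply, if_neg hi] at h0
            simp only [Nat.sub_zero] at h0
            exact hai₀ h0
        · rfl
      rw [Finset.sum_eq_single i₀ (fun i _ hi => other i hi)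
        (fun hmem => absurd (Finset.mem_univ i₀) hmem), main]
  rw [key]
  exact Ideal.sum_mem _ fun i _ =>
    Ideal.mul_mem_right _ _ (Ideal.subset_span ⟨i, rfl⟩)

theorem charP_mvps [CharP k p] : CharP (MvPowerSeries (Fin d) k) p :=
  charP_of_injective_algebraMap' k p

theorem pow_mem_span_X_pow [CharP k p] (hp : p.Prime) {g : MvPowerSeries (Fin d) k}
    (hg : constantCoeff g = 0) (e : ℕ) :
    g ^ p ^ e ∈ Ideal.span
      (Set.range fun i : Fin d => (X i : MvPowerSeries (Fin d) k) ^ p ^ e) := by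
  classical
  haveI := charP_mvps (d := d) (p := p) (k := k)
  haveI : Fact p.Prime := ⟨hp⟩
  obtain ⟨c, hc⟩ := Ideal.mem_span_range_iff_exists_fun.1 (mem_span_X hg)
  rw [← hc, sum_pow_char_pow]
  refine Ideal.sum_mem _ fun i _ => ?_
  rw [mul_pow]
  exact Ideal.mul_mem_left _ _ (Ideal.subset_span ⟨i, rfl⟩)

theorem coeff_eq_zero_of_mem_span_X_pow {q : ℕ} {h : MvPowerSeries (Fin d) k}
    (hh : h ∈ Ideal.span
      (Set.range fun i : Fin d => (X i : MvPowerSeries (Fin d) k) ^ q))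
    {a : Fin d →₀ ℕ} (ha : ∀ i, a i < q) :
    coeff a h = 0 := by
  classical
  obtain ⟨c, hc⟩ := Ideal.mem_span_range_iff_exists_fun.1 hh
  rw [← hc, map_sum]
  refine Finset.sum_eq_zero fun i _ => ?_
  rw [X_pow_eq, coeff_mul_monomial, if_neg]
  intro hle
  exact absurd (Finsupp.single_le_iff.1 hle) (not_le.2 (ha i))

theorem order_ge_of_mem_maximalIdeal_pow {g : MvPowerSeries (Fin d) k} {m : ℕ}
    (hg : g ∈ (IsLocalRing.maximalIdeal (MvPowerSeries (Fin d) k)) ^ m) :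
    (m : ℕ∞) ≤ g.order := by
  classical
  induction m generalizing g with
  | zero => simp
  | succ m ih =>
    rw [pow_succ] at hg
    refine Submodule.mul_induction_on hg ?_ ?_
    · intro x hx y hy
      have hx' : (m : ℕ∞) ≤ x.order := ih hx
      have hy' : (1 : ℕ∞) ≤ y.order := by
        apply le_order
        intro b hb
        have hb0 : b = 0 := by
          have hdeg : b.degree = 0 := by
            by_contra hne
            have h1 : (1 : ℕ∞) ≤ (b.degree : ℕ∞) := by
              exact_mod_cast Nat.one_le_iff_ne_zero.2 hne
            exact absurd hb (not_lt.2 h1)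
          exact (Finsupp.degree_eq_zero_iff b).mp hdeg
        subst hb0
        rw [coeff_zero_eq_constantCoeff]
        have hnu := (IsLocalRing.mem_maximalIdeal y).1 hy
        rw [mem_nonunits_iff] at hnu
        by_contra hne
        exact hnu (isUnit_iff_constantCoeff.2 (isUnit_iff_ne_zero.2 hne))
      calc ((m + 1 : ℕ) : ℕ∞) = (m : ℕ∞) + 1 := by push_cast; ring
        _ ≤ x.order + y.order := add_le_add hx' hy'
        _ ≤ (x * y).order := le_order_mul
    · intro x y hx hy
      exact le_trans (le_min hx hy) min_order_le_add

theorem order_pow_ge {g : MvPowerSeries (Fin d) k} {m : ℕ}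
    (hg : (m : ℕ∞) ≤ g.order) (N : ℕ) : ((m * N : ℕ) : ℕ∞) ≤ (g ^ N).order := by
  induction N with
  | zero => simp
  | succ N ih =>
    rw [pow_succ]
    calc ((m * (N+1) : ℕ) : ℕ∞) = ((m*N : ℕ) : ℕ∞) + (m : ℕ∞) := by push_cast; ring
      _ ≤ (g ^ N).order + g.order := add_le_add ih hg
      _ ≤ _ := le_order_mul

theorem coeff_pow_eq_initial {f F : MvPowerSeries (Fin d) k} {n N : ℕ}
    (hF : (n : ℕ∞) ≤ F.order) (hdiff : ((n + 1 : ℕ) : ℕ∞) ≤ (f - F).order)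
    {a : Fin d →₀ ℕ} (ha : a.degree = n * N) :
    coeff a (f ^ N) = coeff a (F ^ N) := by
  classical
  have hf : f = F + (f - F) := by ring
  rw [hf, add_pow, map_sum]
  rw [Finset.sum_eq_single N]
  · simp
  · intro j hj hjne
    have hjN : j < N + 1 := Finset.mem_range.1 hj
    have hjlt : j < N := by omega
    have h1 : ((n * j : ℕ) : ℕ∞) ≤ (F ^ j).order := order_pow_ge hF j
    have h2 : (((n + 1) * (N - j) : ℕ) : ℕ∞) ≤ ((f - F) ^ (N - j)).order :=
      order_pow_ge hdiff (N - j)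
    have h3 : ((n * j + (n + 1) * (N - j) : ℕ) : ℕ∞) ≤ (F ^ j * (f - F) ^ (N - j)).order := by
      calc ((n * j + (n + 1) * (N - j) : ℕ) : ℕ∞)
          = ((n * j : ℕ) : ℕ∞) + (((n + 1) * (N - j) : ℕ) : ℕ∞) := by push_cast; ring
        _ ≤ (F ^ j).order + ((f - F) ^ (N - j)).order := add_le_add h1 h2
        _ ≤ _ := le_order_mul
    have h4 : ((n * j + (n + 1) * (N - j) : ℕ) : ℕ∞)
        ≤ (F ^ j * (f - F) ^ (N - j) * ((N.choose j : ℕ) : MvPowerSeries (Fin d) k)).order := by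
      refine le_trans h3 ?_
      calc (F ^ j * (f - F) ^ (N - j)).order
          = (F ^ j * (f - F) ^ (N - j)).order + 0 := by rw [add_zero]
        _ ≤ (F ^ j * (f - F) ^ (N - j)).order
            + ((N.choose j : ℕ) : MvPowerSeries (Fin d) k).order :=
            add_le_add le_rfl (zero_le (a := _))
        _ ≤ _ := le_order_mul
    apply coeff_of_lt_order
    refine lt_of_lt_of_le ?_ h4
    rw [ha]
    have hNj : j + (N - j) = N := by omega
    have e1 : n * j + (n + 1) * (N - j) = n * (j + (N - j)) + (N - j) := by ring
    rw [e1, hNj]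
    have : n * N < n * N + (N - j) := by omega
    exact_mod_cast this
  · intro hN
    exact absurd (Finset.mem_range.2 (by omega)) hN

end Aux


section Core

open MvPolynomial

variable {d p : ℕ} {k : Type*} [Field k]

/-- support condition: every monomial has some exponent `≥ q` -/
def PP (q : ℕ) (h : MvPolynomial (Fin d) k) : Prop := ∀ b ∈ h.support, ∃ i, q ≤ b i

theorem PP_mem_span {q : ℕ} {h : MvPolynomial (Fin d) k} (hh : PP q h) :
    h ∈ Ideal.span (Set.range fun i : Fin d => (X i : MvPolynomial (Fin d) k) ^ q) := by
  classical
  nth_rewrite 1 [as_sum h]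
  refine Ideal.sum_mem _ fun v hv => ?_
  obtain ⟨i, hi⟩ := hh v hv
  have hle : Finsupp.single i q ≤ v := Finsupp.single_le_iff.2 hi
  have : monomial v (coeff v h) =
      X i ^ q * monomial (v - Finsupp.single i q) (coeff v h) := by
    rw [X_pow_eq_monomial, monomial_mul, one_mul, add_tsub_cancel_of_le hle]
  rw [this]
  exact Ideal.mul_mem_right _ _ (Ideal.subset_span ⟨i, rfl⟩)

theorem mem_span_PP {q : ℕ} {h : MvPolynomial (Fin d) k}
    (hh : h ∈ Ideal.span (Set.range fun i : Fin d => (X i : MvPolynomial (Fin d) k) ^ q)) :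
    PP q h := by
  classical
  intro b hb
  by_contra hcon
  push_neg at hcon
  obtain ⟨c, hc⟩ := Ideal.mem_span_range_iff_exists_fun.1 hh
  have hzero : coeff b h = 0 := by
    rw [← hc, coeff_sum]
    refine Finset.sum_eq_zero fun i _ => ?_
    rw [X_pow_eq_monomial]
    -- coeff b (c i * monomial s 1) = 0 since ¬ single i q ≤ b
    rw [coeff_mul_monomial']
    rw [if_neg]
    intro hle
    exact absurd (Finsupp.single_le_iff.1 hle) (not_le.2 (hcon i))
  exact (MvPolynomial.mem_support_iff.1 hb) hzero
theorem pderiv_mem_span [CharP k p] (hp : p.Prime) {e : ℕ} (he : 1 ≤ e)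
    {h : MvPolynomial (Fin d) k} (j : Fin d)
    (hh : h ∈ Ideal.span (Set.range fun i : Fin d => (X i : MvPolynomial (Fin d) k) ^ p ^ e)) :
    pderiv j h ∈ Ideal.span
      (Set.range fun i : Fin d => (X i : MvPolynomial (Fin d) k) ^ p ^ e) := by
  classical
  obtain ⟨c, hc⟩ := Ideal.mem_span_range_iff_exists_fun.1 hh
  have hXzero : ∀ i : Fin d, pderiv j ((X i : MvPolynomial (Fin d) k) ^ p ^ e) = 0 := by
    intro i
    rw [pderiv_pow]
    have : ((p ^ e : ℕ) : MvPolynomial (Fin d) k) = 0 := by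
      rw [← C_eq_coe_nat]
      have : ((p ^ e : ℕ) : k) = 0 := by
        rw [Nat.cast_pow]
        rw [CharP.cast_eq_zero k p]
        exact zero_pow (by omega)
      rw [this, map_zero]
    rw [this, zero_mul, zero_mul]
  rw [← hc, map_sum]
  refine Ideal.sum_mem _ fun i _ => ?_
  rw [pderiv_mul, hXzero i, mul_zero, add_zero]
  exact Ideal.mul_mem_left _ _ (Ideal.subset_span ⟨i, rfl⟩)

theorem smul_mem_support_pow_char [CharP k p] (hp : p.Prime) {g : MvPolynomial (Fin d) k}
    {b : Fin d →₀ ℕ} (hb : b ∈ g.support) : p • b ∈ (g ^ p).support := by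
  classical
  haveI : CharP (MvPolynomial (Fin d) k) p := charP_of_injective_algebraMap' k p
  haveI : Fact p.Prime := ⟨hp⟩
  haveI : ExpChar (MvPolynomial (Fin d) k) p := ExpChar.prime hp
  rw [MvPolynomial.mem_support_iff]
  have expand : g ^ p = ∑ v ∈ g.support, monomial (p • v) (coeff v g ^ p) := by
    nth_rewrite 1 [as_sum g]
    rw [sum_pow_char]
    refine Finset.sum_congr rfl fun v _ => ?_
    rw [monomial_pow]
  rw [expand, coeff_sum]
  rw [Finset.sum_eq_single b]
  · rw [coeff_monomial, if_pos rfl]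
    exact pow_ne_zero _ (MvPolynomial.mem_support_iff.1 hb)
  · intro v _ hvb
    rw [coeff_monomial, if_neg]
    intro hcon
    apply hvb
    ext i
    have := DFunLike.congr_fun hcon i
    simp only [Finsupp.smul_apply, smul_eq_mul] at this
    exact Nat.eq_of_mul_eq_mul_left hp.pos this
  · intro hcon
    exact absurd hb hcon

theorem span_poly_to_series {q : ℕ} {h : MvPolynomial (Fin d) k}
    (hh : h ∈ Ideal.span (Set.range fun i : Fin d => (X i : MvPolynomial (Fin d) k) ^ q)) :
    (h : MvPowerSeries (Fin d) k) ∈ Ideal.span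
      (Set.range fun i : Fin d => (MvPowerSeries.X i : MvPowerSeries (Fin d) k) ^ q) := by
  classical
  obtain ⟨c, hc⟩ := Ideal.mem_span_range_iff_exists_fun.1 hh
  rw [← hc]
  have : ((∑ i, c i * X i ^ q : MvPolynomial (Fin d) k) : MvPowerSeries (Fin d) k)
      = ∑ i, (c i : MvPowerSeries (Fin d) k) * (MvPowerSeries.X i) ^ q := by
    rw [← MvPolynomial.coeToMvPowerSeries.ringHom_apply, map_sum]
    refine Finset.sum_congr rfl fun i _ => ?_
    rw [map_mul, map_pow, MvPolynomial.coeToMvPowerSeries.ringHom_apply,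
      MvPolynomial.coeToMvPowerSeries.ringHom_apply, MvPolynomial.coe_X]
  rw [this]
  refine Ideal.sum_mem _ fun i _ => ?_
  exact Ideal.mul_mem_left _ _ (Ideal.subset_span ⟨i, rfl⟩)

-- series span membership of a polynomial implies PP (coefficients vanish inside the box)
theorem series_span_to_PP {q : ℕ} {h : MvPolynomial (Fin d) k}
    (hh : (h : MvPowerSeries (Fin d) k) ∈ Ideal.span
      (Set.range fun i : Fin d => (MvPowerSeries.X i : MvPowerSeries (Fin d) k) ^ q)) :
    PP q h := by
  classical
  intro b hb
  by_contra hcon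
  push_neg at hcon
  obtain ⟨c, hc⟩ := Ideal.mem_span_range_iff_exists_fun.1 hh
  have hzero : MvPowerSeries.coeff b (h : MvPowerSeries (Fin d) k) = 0 := by
    rw [← hc, map_sum]
    refine Finset.sum_eq_zero fun i _ => ?_
    rw [MvPowerSeries.X_pow_eq, MvPowerSeries.coeff_mul_monomial, if_neg]
    intro hle
    exact absurd (Finsupp.single_le_iff.1 hle) (not_le.2 (hcon i))
  rw [MvPolynomial.coeff_coe] at hzero
  exact (MvPolynomial.mem_support_iff.1 hb) hzero

theorem hJ_step (fn : MvPolynomial (Fin d) k) (m' : Fin d → ℕ)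
    (hJ : Ideal.span (Set.range fun i : Fin d =>
        (MvPowerSeries.X i : MvPowerSeries (Fin d) k) ^ m' i) ≤
      Ideal.span (Set.range fun i : Fin d =>
        (MvPolynomial.coeToMvPowerSeries.ringHom (MvPolynomial.pderiv i fn) :
          MvPowerSeries (Fin d) k)))
    {q c : ℕ} (hder : ∀ j, PP q (pderiv j fn * fn ^ c)) (i : Fin d) :
    PP q (fn ^ c * X i ^ m' i) := by
  classical
  apply series_span_to_PP (q := q)
  have hXm : (MvPowerSeries.X i : MvPowerSeries (Fin d) k) ^ m' i ∈
      Ideal.span (Set.range fun i : Fin d =>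
        (MvPolynomial.coeToMvPowerSeries.ringHom (MvPolynomial.pderiv i fn) :
          MvPowerSeries (Fin d) k)) :=
    hJ (Ideal.subset_span ⟨i, rfl⟩)
  obtain ⟨G, hG⟩ := Ideal.mem_span_range_iff_exists_fun.1 hXm
  have key : ((fn ^ c * X i ^ m' i : MvPolynomial (Fin d) k) : MvPowerSeries (Fin d) k)
      = ∑ j, G j * ((pderiv j fn * fn ^ c : MvPolynomial (Fin d) k) :
          MvPowerSeries (Fin d) k) := by
    rw [← MvPolynomial.coeToMvPowerSeries.ringHom_apply, map_mul, map_pow, map_pow]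
    rw [MvPolynomial.coeToMvPowerSeries.ringHom_apply (X i)]
    rw [MvPolynomial.coe_X, ← hG, Finset.mul_sum]
    refine Finset.sum_congr rfl fun j _ => ?_
    rw [← MvPolynomial.coeToMvPowerSeries.ringHom_apply (pderiv j fn * fn ^ c), map_mul,
      map_pow]
    ring
  rw [key]
  refine Ideal.sum_mem _ fun j _ => ?_
  exact Ideal.mul_mem_left _ _ (span_poly_to_series (PP_mem_span (hder j)))

theorem key_bound [CharP k p] (hp : p.Prime) {n : ℕ}
    (fn : MvPolynomial (Fin d) k) (hfnhom : fn.IsHomogeneous n)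
    (m' : Fin d → ℕ)
    (hJ : Ideal.span (Set.range fun i : Fin d =>
        (MvPowerSeries.X i : MvPowerSeries (Fin d) k) ^ m' i) ≤
      Ideal.span (Set.range fun i : Fin d =>
        (MvPolynomial.coeToMvPowerSeries.ringHom (MvPolynomial.pderiv i fn) :
          MvPowerSeries (Fin d) k))) :
    ∀ e s : ℕ, PP (p ^ e) (fn ^ s) →
      p ^ e ≤ s ∨ ∃ j, 1 ≤ j ∧ j ≤ e ∧
        p ^ (e - j) * (d * p ^ j + n) ≤ n * s + p ^ (e - j) * (∑ i, m' i) := by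
  classical
  intro e
  induction e with
  | zero =>
    intro s hs
    left
    rcases Nat.eq_zero_or_pos s with rfl | hpos
    · exfalso
      have h1 : (0 : Fin d →₀ ℕ) ∈ (fn ^ 0 : MvPolynomial (Fin d) k).support := by
        rw [pow_zero]
        rw [MvPolynomial.mem_support_iff]
        simp
      obtain ⟨i, hi⟩ := hs 0 h1
      simp at hi
    · simpa using Nat.succ_le_of_lt hpos
  | succ e ih =>
    intro s hs
    have hex : ∃ t, PP (p ^ (e + 1)) (fn ^ t) := ⟨s, hs⟩
    set t₀ := Nat.find hex with ht₀def
    have ht₀ : PP (p ^ (e + 1)) (fn ^ t₀) := Nat.find_spec hex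
    have ht₀le : t₀ ≤ s := Nat.find_min' hex hs
    have ht₀pos : 1 ≤ t₀ := by
      rcases Nat.eq_zero_or_pos t₀ with h0 | h; swap
      · exact h
      exfalso
      rw [h0] at ht₀
      have h1 : (0 : Fin d →₀ ℕ) ∈ (fn ^ 0 : MvPolynomial (Fin d) k).support := by
        rw [pow_zero, MvPolynomial.mem_support_iff]; simp
      obtain ⟨i, hi⟩ := ht₀ 0 h1
      have hpos : 0 < p ^ (e + 1) := pow_pos hp.pos _
      rw [Finsupp.zero_apply] at hi
      omega
    by_cases hdvd : p ∣ t₀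
    · obtain ⟨u, hu⟩ := hdvd
      have hPPu : PP (p ^ e) (fn ^ u) := by
        intro b hb
        have hmem : p • b ∈ ((fn ^ u) ^ p).support := smul_mem_support_pow_char hp hb
        rw [← pow_mul] at hmem
        have hmem' : p • b ∈ (fn ^ t₀).support := by
          rwa [hu, mul_comm p u]
        obtain ⟨i, hi⟩ := ht₀ (p • b) hmem'
        refine ⟨i, ?_⟩
        have : p * p ^ e ≤ p * b i := by
          rw [← pow_succ']
          simpa using hi
        exact Nat.le_of_mul_le_mul_left this hp.pos
      rcases ih u hPPu with h | ⟨j, hj1, hje, hbound⟩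
      · left
        calc p ^ (e + 1) = p * p ^ e := by rw [pow_succ']
          _ ≤ p * u := Nat.mul_le_mul_left p h
          _ = t₀ := hu.symm
          _ ≤ s := ht₀le
      · right
        refine ⟨j, hj1, hje.trans (Nat.le_succ e), ?_⟩
        have hsub : e + 1 - j = (e - j) + 1 := by omega
        rw [hsub, pow_succ]
        have step : p ^ (e - j) * (d * p ^ j + n) * p ≤ (n * u + p ^ (e - j) * ∑ i, m' i) * p :=
          Nat.mul_le_mul_right p hbound
        calc p ^ (e - j) * p * (d * p ^ j + n)
            = p ^ (e - j) * (d * p ^ j + n) * p := by ring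
          _ ≤ (n * u + p ^ (e - j) * ∑ i, m' i) * p := step
          _ = n * (p * u) + p ^ (e - j) * p * ∑ i, m' i := by ring
          _ = n * t₀ + p ^ (e - j) * p * ∑ i, m' i := by rw [hu]
          _ ≤ n * s + p ^ (e - j) * p * ∑ i, m' i := by
              have := Nat.mul_le_mul_left n ht₀le
              omega
    · -- p does not divide t₀ : the Jacobian-colon step
      right
      refine ⟨e + 1, by omega, le_refl _, ?_⟩
      simp only [Nat.sub_self, pow_zero, one_mul]
      -- minimality gives a box monomial of fn ^ (t₀ - 1)
      have hnot : ¬ PP (p ^ (e + 1)) (fn ^ (t₀ - 1)) :=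
        Nat.find_min hex (by omega)
      rw [PP] at hnot
      push_neg at hnot
      obtain ⟨b, hbmem, hbox⟩ := hnot
      -- derivation step : fn ^ (t₀ - 1) * pderiv j fn lies in the span
      have hder : ∀ j : Fin d, PP (p ^ (e + 1)) (pderiv j fn * fn ^ (t₀ - 1)) := by
        intro j
        have h1 : pderiv j (fn ^ t₀) ∈ Ideal.span
            (Set.range fun i : Fin d => (X i : MvPolynomial (Fin d) k) ^ p ^ (e + 1)) :=
          pderiv_mem_span hp (by omega) j (PP_mem_span ht₀)
        have h2 : C ((t₀ : k)⁻¹) * pderiv j (fn ^ t₀) ∈ Ideal.span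
            (Set.range fun i : Fin d => (X i : MvPolynomial (Fin d) k) ^ p ^ (e + 1)) :=
          Ideal.mul_mem_left _ _ h1
        have ht₀ne : (t₀ : k) ≠ 0 := by
          intro hc
          exact hdvd ((CharP.cast_eq_zero_iff k p t₀).1 hc)
        have h3 : C ((t₀ : k)⁻¹) * pderiv j (fn ^ t₀) = pderiv j fn * fn ^ (t₀ - 1) := by
          rw [pderiv_pow]
          have hcast : ((t₀ : ℕ) : MvPolynomial (Fin d) k) = C ((t₀ : ℕ) : k) := by
            rw [C_eq_coe_nat]
          rw [hcast, ← mul_assoc, ← mul_assoc, ← C_mul, inv_mul_cancel₀ ht₀ne, C_1, one_mul]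
          ring
        rw [h3] at h2
        exact mem_span_PP h2
      -- Jacobian : multiply by the monomials x_i ^ {m_i}
      have hcolon : ∀ i : Fin d, p ^ (e + 1) ≤ b i + m' i := by
        intro i
        have hPPi : PP (p ^ (e + 1)) (fn ^ (t₀ - 1) * X i ^ m' i) :=
          hJ_step fn m' hJ hder i
        have hmem2 : b + Finsupp.single i (m' i) ∈
            (fn ^ (t₀ - 1) * X i ^ m' i).support := by
          rw [MvPolynomial.mem_support_iff, X_pow_eq_monomial, coeff_mul_monomial, mul_one]
          exact MvPolynomial.mem_support_iff.1 hbmem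
        obtain ⟨l, hl⟩ := hPPi _ hmem2
        by_cases hli : l = i
        · subst hli
          simpa using hl
        · exfalso
          rw [Finsupp.add_apply, Finsupp.single_apply, if_neg (Ne.symm hli), add_zero] at hl
          exact absurd hl (not_le.2 (hbox l))
      -- degree count
      have hdeg : ∑ i, b i = n * (t₀ - 1) := by
        have hb' : b.degree = n * (t₀ - 1) := by
          by_contra hne
          exact (MvPolynomial.mem_support_iff.1 hbmem)
            ((hfnhom.pow (t₀ - 1)).coeff_eq_zero hne)
        rw [← hb']
        rw [Finsupp.degree]
        exact (Finset.sum_subset (Finset.subset_univ _)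
          (fun x _ hx => Finsupp.notMem_support_iff.mp hx)).symm
      have hsum : d * p ^ (e + 1) ≤ n * (t₀ - 1) + ∑ i, m' i := by
        calc d * p ^ (e + 1) = ∑ _i : Fin d, p ^ (e + 1) := by
              rw [Finset.sum_const, Finset.card_univ, Fintype.card_fin, smul_eq_mul]
          _ ≤ ∑ i, (b i + m' i) := Finset.sum_le_sum fun i _ => hcolon i
          _ = (∑ i, b i) + ∑ i, m' i := Finset.sum_add_distrib
          _ = n * (t₀ - 1) + ∑ i, m' i := by rw [hdeg]
      have hfinal : n * (t₀ - 1) + n = n * t₀ := by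
        conv_rhs => rw [← Nat.sub_add_cancel ht₀pos]
        rw [Nat.mul_add, Nat.mul_one]
      have hstep : d * p ^ (e + 1) + n ≤ n * t₀ + ∑ i, m' i := by
        calc d * p ^ (e + 1) + n ≤ (n * (t₀ - 1) + ∑ i, m' i) + n :=
              Nat.add_le_add_right hsum n
          _ = (n * (t₀ - 1) + n) + ∑ i, m' i := by ring
          _ = n * t₀ + ∑ i, m' i := by rw [hfinal]
      have hmono : n * t₀ ≤ n * s := Nat.mul_le_mul_left n ht₀le
      calc d * p ^ (e + 1) + n ≤ n * t₀ + ∑ i, m' i := hstep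
        _ ≤ n * s + ∑ i, m' i := Nat.add_le_add_right hmono _

theorem core_comb [CharP k p] (hp : p.Prime) (hd : 1 ≤ d) {n : ℕ} (hn : 1 ≤ n)
    (fn : MvPolynomial (Fin d) k) (hfnhom : fn.IsHomogeneous n)
    (t : ℚ) (ht0 : 0 ≤ t) (ht1 : t < 1) (htdn : t < (d : ℚ) / n)
    (m' : Fin d → ℕ)
    (hJ : Ideal.span (Set.range fun i : Fin d =>
        (MvPowerSeries.X i : MvPowerSeries (Fin d) k) ^ m' i) ≤
      Ideal.span (Set.range fun i : Fin d =>
        (MvPolynomial.coeToMvPowerSeries.ringHom (MvPolynomial.pderiv i fn) :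
          MvPowerSeries (Fin d) k)))
    (hpbound : (∑ i, (m' i : ℚ)) / ((d : ℚ) - n * t) ≤ (p : ℚ))
    (e : ℕ) (he : 1 ≤ e) :
    ∃ a : Fin d →₀ ℕ, (∀ i, a i < p ^ e) ∧
      MvPolynomial.coeff a (fn ^ ⌊t * (p : ℚ) ^ e⌋₊) ≠ 0 := by
  classical
  set N := ⌊t * (p : ℚ) ^ e⌋₊ with hN
  by_contra hcon
  push_neg at hcon
  have hPP : PP (p ^ e) (fn ^ N) := by
    intro b hb
    by_contra hno
    push_neg at hno
    exact (MvPolynomial.mem_support_iff.1 hb) (hcon b hno)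
  -- rational preliminaries
  have hppos : (0 : ℚ) < p := by exact_mod_cast hp.pos
  have hp1 : (1 : ℚ) ≤ p := by exact_mod_cast hp.one_lt.le
  have hnQ : (1 : ℚ) ≤ n := by exact_mod_cast hn
  have hn0 : (0 : ℚ) < (n : ℚ) := by
    have : 0 < n := hn
    exact_mod_cast this
  have hdsub : (0 : ℚ) < (d : ℚ) - n * t := by
    have h := (lt_div_iff₀ hn0).1 htdn
    nlinarith
  have hS : (∑ i, (m' i : ℚ)) ≤ (p : ℚ) * ((d : ℚ) - n * t) :=
    (div_le_iff₀ hdsub).1 hpbound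
  have hSnn : (0 : ℚ) ≤ ∑ i, (m' i : ℚ) :=
    Finset.sum_nonneg fun i _ => by positivity
  have hNle : (N : ℚ) ≤ t * (p : ℚ) ^ e := Nat.floor_le (by positivity)
  rcases key_bound hp fn hfnhom m' hJ e N hPP with h | ⟨j, hj1, hje, hbound⟩
  · -- N ≥ p^e contradicts t < 1
    have h1 : ((p : ℚ)) ^ e ≤ (N : ℚ) := by exact_mod_cast h
    have h2 : t * (p : ℚ) ^ e < 1 * (p : ℚ) ^ e :=
      mul_lt_mul_of_pos_right ht1 (by positivity)
    rw [one_mul] at h2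
    linarith
  · -- the colon bound contradicts hpbound
    have hQ : (p : ℚ) ^ (e - j) * ((d : ℚ) * (p : ℚ) ^ j + n)
        ≤ (n : ℚ) * N + (p : ℚ) ^ (e - j) * ∑ i, (m' i : ℚ) := by
      have := hbound
      have hcast : ((p ^ (e - j) * (d * p ^ j + n) : ℕ) : ℚ)
          ≤ ((n * N + p ^ (e - j) * ∑ i, m' i : ℕ) : ℚ) := by exact_mod_cast this
      push_cast at hcast
      convert hcast using 2 <;> push_cast <;> ring
    have hpe : (p : ℚ) ^ (e - j) * (p : ℚ) ^ j = (p : ℚ) ^ e := by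
      rw [← pow_add]
      congr 1
      omega
    have hexpand : (p : ℚ) ^ (e - j) * ((d : ℚ) * (p : ℚ) ^ j + n)
        = (d : ℚ) * (p : ℚ) ^ e + (p : ℚ) ^ (e - j) * n := by
      rw [mul_add, ← mul_assoc, mul_comm ((p:ℚ) ^ (e - j)) (d : ℚ), mul_assoc, hpe]
    have hpe1 : (p : ℚ) * (p : ℚ) ^ (e - 1) = (p : ℚ) ^ e := by
      rw [← pow_succ']
      congr 1
      omega
    have h1 : (n : ℚ) * t * (p : ℚ) ^ e
        ≤ (d : ℚ) * (p : ℚ) ^ e - (∑ i, (m' i : ℚ)) * (p : ℚ) ^ (e - 1) := by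
      have hmul : (∑ i, (m' i : ℚ)) * (p : ℚ) ^ (e - 1)
          ≤ ((p : ℚ) * ((d : ℚ) - n * t)) * (p : ℚ) ^ (e - 1) :=
        mul_le_mul_of_nonneg_right hS (by positivity)
      have : ((p : ℚ) * ((d : ℚ) - n * t)) * (p : ℚ) ^ (e - 1)
          = (d : ℚ) * (p : ℚ) ^ e - (n : ℚ) * t * (p : ℚ) ^ e := by
        rw [show ((p : ℚ) * ((d : ℚ) - n * t)) * (p : ℚ) ^ (e - 1)
            = ((d : ℚ) - n * t) * ((p : ℚ) * (p : ℚ) ^ (e - 1)) by ring, hpe1]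
        ring
      linarith
    have h2 : (n : ℚ) * N ≤ (n : ℚ) * t * (p : ℚ) ^ e := by
      have := mul_le_mul_of_nonneg_left hNle (by positivity : (0:ℚ) ≤ (n:ℚ))
      linarith
    have h3 : (p : ℚ) ^ (e - j) ≤ (p : ℚ) ^ (e - 1) :=
      pow_le_pow_right₀ hp1 (by omega)
    have hS3 : (p : ℚ) ^ (e - j) * ∑ i, (m' i : ℚ)
        ≤ (p : ℚ) ^ (e - 1) * ∑ i, (m' i : ℚ) :=
      mul_le_mul_of_nonneg_right h3 hSnn
    have hposP : (0 : ℚ) < (p : ℚ) ^ (e - j) * n := by positivity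
    rw [hexpand] at hQ
    linarith [hQ, h1, h2, hS3, hposP]


end Core

section Main

open MvPowerSeries

theorem stmt_15 (p : ℕ) (hp : p.Prime) (k : Type*) [Field k] [CharP k p]
    [ExpChar k p] [PerfectRing k p] (d : ℕ) (hd : 1 ≤ d) (n : ℕ) (hn : 1 ≤ n)
    (f : MvPowerSeries (Fin d) k)
    (hf1 : f ∈ (IsLocalRing.maximalIdeal (MvPowerSeries (Fin d) k)) ^ n)
    (hf2 : f ∉ (IsLocalRing.maximalIdeal (MvPowerSeries (Fin d) k)) ^ (n + 1))
    (fn : MvPolynomial (Fin d) k) (hfn0 : fn ≠ 0) (hfnhom : fn.IsHomogeneous n)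
    (hfncoeff : ∀ m : Fin d →₀ ℕ, (m.sum fun _ e => e) = n →
      MvPolynomial.coeff m fn = MvPowerSeries.coeff m f)
    (t : ℚ) (ht0 : 0 ≤ t) (ht1 : t < 1) (htdn : t < (d : ℚ) / n)
    (m' : Fin d → ℕ) (hm' : ∀ i, 1 ≤ m' i)
    (hJ : Ideal.span (Set.range fun i : Fin d => (MvPowerSeries.X i : MvPowerSeries (Fin d) k) ^ m' i) ≤
      Ideal.span (Set.range fun i : Fin d =>
        (MvPolynomial.coeToMvPowerSeries.ringHom (MvPolynomial.pderiv i fn) :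
          MvPowerSeries (Fin d) k)))
    (hpbound : (∑ i, (m' i : ℚ)) / ((d : ℚ) - n * t) ≤ (p : ℚ)) :
    ∀ e : ℕ, 1 ≤ e →
      f ^ ⌊t * (p : ℚ) ^ e⌋₊ ∉
        bracketPow (IsLocalRing.maximalIdeal (MvPowerSeries (Fin d) k)) (p ^ e) := by
  intro e he hmem
  classical
  set N := ⌊t * (p : ℚ) ^ e⌋₊ with hN
  obtain ⟨a, haq, hane⟩ := core_comb hp hd hn fn hfnhom t ht0 ht1 htdn m' hJ hpbound e he
  have hhom : (fn ^ N).IsHomogeneous (n * N) := hfnhom.pow N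
  have hadeg : a.degree = n * N := by
    by_contra hne
    exact hane (hhom.coeff_eq_zero hne)
  have hford : (n : ℕ∞) ≤ f.order := order_ge_of_mem_maximalIdeal_pow hf1
  have hFord : (n : ℕ∞) ≤ (↑fn : MvPowerSeries (Fin d) k).order := by
    apply le_order
    intro b hb
    rw [MvPolynomial.coeff_coe]
    apply hfnhom.coeff_eq_zero
    intro hbe
    rw [hbe] at hb
    exact lt_irrefl _ hb
  have hdiff : ((n + 1 : ℕ) : ℕ∞) ≤ (f - ↑fn).order := by
    apply le_order
    intro b hb
    have hb' : b.degree < n + 1 := by exact_mod_cast hb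
    rw [map_sub]
    rcases eq_or_lt_of_le (Nat.lt_succ_iff.1 hb') with heq | hltn
    · have hsum : (b.sum fun _ e => e) = n := by
        rw [← heq]
        rfl
      rw [← hfncoeff b hsum, MvPolynomial.coeff_coe, sub_self]
    · have hzf : coeff b f = 0 := by
        apply coeff_of_lt_order
        refine lt_of_lt_of_le ?_ hford
        exact_mod_cast hltn
      have hzF : coeff b (↑fn : MvPowerSeries (Fin d) k) = 0 := by
        rw [MvPolynomial.coeff_coe]
        exact hfnhom.coeff_eq_zero (by omega)
      rw [hzf, hzF, sub_zero]
  have hcoeff : coeff a (f ^ N) = MvPolynomial.coeff a (fn ^ N) := by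
    rw [coeff_pow_eq_initial hFord hdiff hadeg, ← MvPolynomial.coe_pow,
      MvPolynomial.coeff_coe]
  have hspanle : bracketPow (IsLocalRing.maximalIdeal (MvPowerSeries (Fin d) k)) (p ^ e) ≤
      Ideal.span (Set.range fun i : Fin d => (X i : MvPowerSeries (Fin d) k) ^ p ^ e) := by
    rw [bracketPow, Ideal.span_le]
    rintro x ⟨g, hgmem, rfl⟩
    have hg0 : constantCoeff g = 0 := by
      have hnu := (IsLocalRing.mem_maximalIdeal g).1 hgmem
      rw [mem_nonunits_iff] at hnu
      by_contra hne
      exact hnu (isUnit_iff_constantCoeff.2 (isUnit_iff_ne_zero.2 hne))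
    exact pow_mem_span_X_pow hp hg0 e
  have hzero : coeff a (f ^ N) = 0 :=
    coeff_eq_zero_of_mem_span_X_pow (hspanle hmem) haq
  rw [hcoeff] at hzero
  exact hane hzero

end Main
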